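/- Let q : [0,∞) → [0,∞) be increasing, concave, with q(0) = 0. Fix b > 0 and an integer m ≥ 0, and let y ∈ (mb, (m+1)b]. Then the infimum of Σ_{i=1}^{m+1} q(z_i) over all z₁,...,z_{m+1} ∈ (0, b] with Σ z_i ≥ y equals m·q(b) + q(y - mb), attained at z₁ = ... = z_m = b, z_{m+1} = y - mb. -/

import Mathlib

open Set

section aux
variable (q : ℝ → ℝ) (hmono : MonotoneOn q (Set.Ici 0))
    (hconc : ConcaveOn ℝ (Set.Ici 0) q) (hq0 : q 0 = 0)

include hmono hq0 in
lemma qnonneg {x : ℝ} (hx : 0 ≤ x) : 0 ≤ q x := by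
  have := hmono (le_refl (0:ℝ)) hx hx
  linarith [this]

include hconc hq0 in
lemma qsubadd {x y : ℝ} (hx : 0 ≤ x) (hy : 0 ≤ y) : q (x + y) ≤ q x + q y := by
  rcases eq_or_lt_of_le (add_nonneg hx hy) with h | h
  · have hx0 : x = 0 := by linarith
    have hy0 : y = 0 := by linarith
    simp [hx0, hy0, hq0]
  · have h1 : x / (x+y) * q (x+y) + y / (x+y) * q 0 ≤ q (x / (x+y) * (x+y) + y / (x+y) * 0) :=
      hconc.2 (le_of_lt h) (le_refl (0:ℝ)) (by positivity) (by positivity)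
        (by field_simp)
    have h2 : y / (x+y) * q (x+y) + x / (x+y) * q 0 ≤ q (y / (x+y) * (x+y) + x / (x+y) * 0) :=
      hconc.2 (le_of_lt h) (le_refl (0:ℝ)) (by positivity) (by positivity)
        (by field_simp; ring)
    have e1 : x / (x+y) * (x+y) + y / (x+y) * 0 = x := by field_simp; ring
    have e2 : y / (x+y) * (x+y) + x / (x+y) * 0 = y := by field_simp; ring
    rw [e1, hq0] at h1
    rw [e2, hq0] at h2
    have e3 : x / (x+y) * q (x+y) + y / (x+y) * q (x+y) = q (x+y) := by
      field_simp
    linarith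

include hconc in
lemma qsmooth {b u v : ℝ} (hu0 : 0 ≤ u) (hub : u ≤ b) (hv0 : 0 ≤ v) (hvb : v ≤ b)
    (hsum : b ≤ u + v) : q b + q (u + v - b) ≤ q u + q v := by
  set a := u + v - b with ha
  have ha0 : 0 ≤ a := by linarith
  rcases eq_or_lt_of_le (show a ≤ b by linarith) with h | h
  · have : u = b := by linarith
    have : v = b := by linarith
    have hu : u = b := by linarith
    have hv : v = b := by linarith
    have hab : a = b := h
    rw [hu, hv, hab]
  · set lam := (b - u) / (b - a) with hlam
    have hba : 0 < b - a := by linarith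
    have hl0 : 0 ≤ lam := by
      apply div_nonneg <;> linarith
    have hl1 : lam ≤ 1 := by
      rw [hlam, div_le_one hba]; linarith
    have h1 : lam * q a + (1 - lam) * q b ≤ q (lam * a + (1 - lam) * b) :=
      hconc.2 ha0 (by linarith : (0:ℝ) ≤ b) hl0 (by linarith) (by ring)
    have h2 : lam * q b + (1 - lam) * q a ≤ q (lam * b + (1 - lam) * a) :=
      hconc.2 (by linarith : (0:ℝ) ≤ b) ha0 hl0 (by linarith) (by ring)
    have e1 : lam * a + (1 - lam) * b = u := by
      rw [hlam]; field_simp; ring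
    have e2 : lam * b + (1 - lam) * a = v := by
      rw [hlam]; field_simp; rw [ha]; ring
    rw [e1] at h1; rw [e2] at h2
    linarith

include hmono hconc hq0 in
lemma qclaim {b : ℝ} (hb : 0 < b) :
    ∀ (n : ℕ) (z : Fin n → ℝ), (∀ i, 0 ≤ z i ∧ z i ≤ b) →
    ∀ (k : ℕ) (r : ℝ), 0 ≤ r → r ≤ b → (k : ℝ) * b + r ≤ ∑ i, z i →
    (k : ℝ) * q b + q r ≤ ∑ i, q (z i) := by
  intro n
  induction n with
  | zero =>
    intro z hz k r hr0 hrb hsum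
    simp only [Finset.univ_eq_empty, Finset.sum_empty] at hsum ⊢
    have hk : (k : ℝ) * b ≤ 0 := by linarith
    have hk0 : (k : ℝ) = 0 := by
      rcases Nat.eq_zero_or_pos k with h | h
      · simp [h]
      · exfalso
        have : 0 < (k : ℝ) * b := by positivity
        linarith
    have hr : r = 0 := by
      rw [hk0] at hsum; linarith
    rw [hk0, hr, hq0]; linarith
  | succ n ih =>
    intro z hz k r hr0 hrb hsum
    set v := z (Fin.last n) with hv
    set z' : Fin n → ℝ := fun i => z i.castSucc with hz'
    have hz'b : ∀ i, 0 ≤ z' i ∧ z' i ≤ b := fun i => hz i.castSucc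
    have hv0 : 0 ≤ v := (hz (Fin.last n)).1
    have hvb : v ≤ b := (hz (Fin.last n)).2
    have hsplit : ∑ i, z i = (∑ i, z' i) + v := Fin.sum_univ_castSucc z
    have hsplitq : ∑ i, q (z i) = (∑ i, q (z' i)) + q v :=
      Fin.sum_univ_castSucc (fun i => q (z i))
    have hqv : 0 ≤ q v := qnonneg q hmono hq0 hv0
    rw [hsplit] at hsum
    rw [hsplitq]
    by_cases h1 : (k : ℝ) * b + r ≤ ∑ i, z' i
    · have := ih z' hz'b k r hr0 hrb h1
      linarith
    · push_neg at h1
      by_cases hvr : r ≤ v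
      · rcases Nat.eq_zero_or_pos k with hk | hk
        · -- k = 0, use monotonicity
          have : q r ≤ q v := hmono (Set.mem_Ici.mpr hr0) (Set.mem_Ici.mpr hv0) hvr
          have hnn : 0 ≤ ∑ i, q (z' i) :=
            Finset.sum_nonneg fun i _ => qnonneg q hmono hq0 (hz'b i).1
          simp only [hk]
          push_cast
          linarith
        · obtain ⟨k', rfl⟩ : ∃ k', k = k' + 1 := ⟨k - 1, (Nat.succ_pred_eq_of_pos hk).symm⟩
          have hr' : 0 ≤ r + b - v := by linarith
          have hrb' : r + b - v ≤ b := by linarith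
          have hsum' : (k' : ℝ) * b + (r + b - v) ≤ ∑ i, z' i := by
            push_cast at hsum ⊢; linarith
          have hih := ih z' hz'b k' (r + b - v) hr' hrb' hsum'
          have hsm : q b + q r ≤ q (r + b - v) + q v := by
            have := qsmooth q hconc (b := b) (u := r + b - v) (v := v)
              hr' hrb' hv0 hvb (by linarith)
            have e : (r + b - v) + v - b = r := by ring
            rw [e] at this; exact this
          push_cast
          push_cast at hih
          linarith
      · push_neg at hvr
        have hr' : 0 ≤ r - v := by linarith
        have hrb' : r - v ≤ b := by linarith
        have hsum' : (k : ℝ) * b + (r - v) ≤ ∑ i, z' i := by linarith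
        have hih := ih z' hz'b k (r - v) hr' hrb' hsum'
        have hsa : q r ≤ q (r - v) + q v := by
          have := qsubadd q hconc hq0 hr' hv0
          have e : r - v + v = r := by ring
          rw [e] at this; exact this
        linarith

end aux

theorem stmt16 (q : ℝ → ℝ) (hmono : MonotoneOn q (Set.Ici 0))
    (hconc : ConcaveOn ℝ (Set.Ici 0) q) (hq0 : q 0 = 0)
    (b : ℝ) (hb : 0 < b) (m : ℕ) (y : ℝ)
    (hy1 : (m : ℝ) * b < y) (hy2 : y ≤ ((m : ℝ) + 1) * b) :
    IsLeast {s : ℝ | ∃ z : Fin (m + 1) → ℝ,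
        (∀ i, 0 < z i ∧ z i ≤ b) ∧ y ≤ ∑ i, z i ∧ s = ∑ i, q (z i)}
      ((m : ℝ) * q b + q (y - (m : ℝ) * b)) := by
  constructor
  · -- membership: witness
    refine ⟨Fin.snoc (fun _ : Fin m => b) (y - (m : ℝ) * b), ?_, ?_, ?_⟩
    · intro i
      refine Fin.lastCases ?_ ?_ i
      · simp only [Fin.snoc_last]
        constructor <;> linarith
      · intro j
        simp only [Fin.snoc_castSucc]
        exact ⟨hb, le_refl b⟩
    · rw [Fin.sum_univ_castSucc]
      simp only [Fin.snoc_castSucc, Fin.snoc_last, Finset.sum_const,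
        Finset.card_univ, Fintype.card_fin, nsmul_eq_mul]
      linarith
    · rw [Fin.sum_univ_castSucc]
      simp only [Fin.snoc_castSucc, Fin.snoc_last, Finset.sum_const,
        Finset.card_univ, Fintype.card_fin, nsmul_eq_mul]
  · rintro s ⟨z, hz, hsum, rfl⟩
    exact qclaim q hmono hconc hq0 hb (m + 1) z (fun i => ⟨le_of_lt (hz i).1, (hz i).2⟩)
      m (y - (m : ℝ) * b) (by linarith) (by linarith) (by linarith)
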